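/- Let p ≥ 1 and let r > 0 satisfy r ≤ 1 and p·r ≤ 1. Then the interval ((p·r/2)^{1/p}, (p·r)^{1/p}] can be covered by at most (8·p^{1/p}·(1 − 2^{−1/p}) + 1)·r^{−(1 − 1/p)} intervals, each of Euclidean diameter at most r/8. -/
import Mathlib


/-- Example 3 (covering bound): the gap annulus ((pr/2)^{1/p}, (pr)^{1/p}]
can be covered by at most (8 p^{1/p}(1 − 2^{−1/p}) + 1)·r^{−(1−1/p)}
intervals, each of Euclidean diameter at most r/8. -/
theorem poly_annulus_cover
    (p r : ℝ) (hp : 1 ≤ p) (hr0 : 0 < r) (hr1 : r ≤ 1) (hpr : p * r ≤ 1) :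
    ∃ N : ℕ,
      (N : ℝ) ≤ (8 * p ^ (1 / p) * (1 - 2 ^ (-(1 / p) : ℝ)) + 1)
                  * r ^ (-(1 - 1 / p)) ∧
      ∃ I : Fin N → Set ℝ,
        (∀ j, ∃ u v : ℝ, I j = Set.Icc u v) ∧
        Set.Ioc ((p * r / 2) ^ (1 / p)) ((p * r) ^ (1 / p)) ⊆ ⋃ j, I j ∧
        ∀ j, ∀ x ∈ I j, ∀ y ∈ I j, |x - y| ≤ r / 8 := by
  have hp0 : 0 < p := lt_of_lt_of_le one_pos hp
  have hpr0 : 0 < p * r := mul_pos hp0 hr0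
  have hs0 : (0:ℝ) < 1 / p := by positivity
  have hs1 : 1 / p ≤ 1 := by
    rw [div_le_one hp0]; exact hp
  set a := (p * r / 2) ^ (1 / p) with ha
  set b := (p * r) ^ (1 / p) with hb
  have hab : a < b := by
    apply Real.rpow_lt_rpow (by positivity) (by linarith) hs0
  have hLpos : 0 < b - a := sub_pos.mpr hab
  -- key algebraic identity
  have hbeq : b = p ^ (1 / p) * r ^ (1 / p) :=
    Real.mul_rpow hp0.le hr0.le
  have haeq : a = b * 2 ^ (-(1 / p) : ℝ) := by
    have : p * r / 2 = (p * r) * 2⁻¹ := by ring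
    rw [ha, this, Real.mul_rpow hpr0.le (by norm_num),
      Real.inv_rpow (by norm_num), ← Real.rpow_neg (by norm_num)]
  have h2le1 : (2:ℝ) ^ (-(1 / p) : ℝ) ≤ 1 :=
    Real.rpow_le_one_of_one_le_of_nonpos one_le_two (by linarith)
  have hb0 : 0 < b := lt_trans (by positivity : (0:ℝ) < a) hab
  have hre : r ^ (1 / p) / r = r ^ (-(1 - 1 / p)) := by
    rw [show (-(1 - 1 / p)) = 1 / p - 1 by ring, Real.rpow_sub hr0,
      Real.rpow_one]
  have hre1 : 1 ≤ r ^ (-(1 - 1 / p)) :=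
    Real.one_le_rpow_of_pos_of_le_one_of_nonpos hr0 hr1 (by linarith)
  have hdiff : b - a = b * (1 - 2 ^ (-(1 / p) : ℝ)) := by
    rw [haeq]; ring
  set N := ⌈8 * (b - a) / r⌉₊ with hN
  have hNpos : 0 < N := by
    rw [hN]
    exact Nat.one_le_ceil_iff.mpr (by positivity)
  have hNle : (N : ℝ) ≤ 8 * (b - a) / r + 1 :=
    le_of_lt (Nat.ceil_lt_add_one (by positivity))
  have hmain : 8 * (b - a) / r = 8 * p ^ (1 / p) * (1 - 2 ^ (-(1 / p) : ℝ))
      * r ^ (-(1 - 1 / p)) := by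
    rw [hdiff, hbeq, ← hre]; ring
  refine ⟨N, ?_, fun j => Set.Icc (a + j * (r / 8)) (a + (j + 1) * (r / 8)),
    fun j => ⟨_, _, rfl⟩, ?_, ?_⟩
  · calc (N : ℝ) ≤ 8 * (b - a) / r + 1 := hNle
      _ ≤ 8 * p ^ (1 / p) * (1 - 2 ^ (-(1 / p) : ℝ)) * r ^ (-(1 - 1 / p))
            + 1 * r ^ (-(1 - 1 / p)) := by
          rw [hmain, one_mul]; linarith
      _ = (8 * p ^ (1 / p) * (1 - 2 ^ (-(1 / p) : ℝ)) + 1)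
            * r ^ (-(1 - 1 / p)) := by ring
  · intro x hx
    obtain ⟨hx1, hx2⟩ := hx
    have ht0 : 0 ≤ (x - a) / (r / 8) := by
      have : 0 ≤ x - a := by linarith
      positivity
    have htN : (x - a) / (r / 8) ≤ N := by
      have h1 : (x - a) / (r / 8) ≤ 8 * (b - a) / r := by
        rw [div_le_div_iff₀ (by positivity) hr0]
        nlinarith
      exact h1.trans (Nat.le_ceil _)
    set j0 := ⌊(x - a) / (r / 8)⌋₊ with hj0
    set j := min j0 (N - 1) with hj
    have hjlt : j < N := lt_of_le_of_lt (min_le_right _ _) (by omega)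
    refine Set.mem_iUnion.mpr ⟨⟨j, hjlt⟩, ?_, ?_⟩
    · have hjle : (j : ℝ) ≤ (x - a) / (r / 8) :=
        le_trans (by exact_mod_cast Nat.cast_le.mpr (min_le_left _ _))
          (Nat.floor_le ht0)
      have := (div_le_iff₀ (by positivity : (0:ℝ) < r / 8)).mp
        (le_refl ((x - a) / (r / 8)))
      have h2 : (j : ℝ) * (r / 8) ≤ x - a := by
        have := mul_le_mul_of_nonneg_right hjle (by positivity : (0:ℝ) ≤ r / 8)
        rwa [div_mul_cancel₀ _ (by positivity : (r/8:ℝ) ≠ 0)] at this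
      simp only [Fin.val_mk]
      linarith
    · simp only [Fin.val_mk]
      have hkey : (x - a) / (r / 8) ≤ (j : ℝ) + 1 := by
        rcases le_or_gt j0 (N - 1) with h | h
        · have : j = j0 := by omega
          rw [this]
          exact le_of_lt (Nat.lt_floor_add_one _)
        · have : j = N - 1 := by omega
          rw [this]
          have : ((N - 1 : ℕ) : ℝ) + 1 = (N : ℝ) := by
            have : (1:ℕ) ≤ N := hNpos
            push_cast [Nat.cast_sub this]
            ring
          rw [this]
          exact htN
      have h2 : x - a ≤ ((j : ℝ) + 1) * (r / 8) := by
        rw [div_le_iff₀ (by positivity : (0:ℝ) < r / 8)] at hkey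
        linarith
      linarith
  · intro j x hx y hy
    obtain ⟨hx1, hx2⟩ := hx
    obtain ⟨hy1, hy2⟩ := hy
    rw [abs_sub_le_iff]
    constructor <;> nlinarith [hr0.le]
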